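/- Let H be a Hilbert space, let (f_k)_{k≥0} be a sequence with f_k ∈ H^{⊗k} satisfying Σ_{k≥0} k!·‖f_k‖² < ∞, let T : H → H be a bounded linear operator and c ∈ H. For k ≥ n define C_{k,n} f_k = ⟨f_k, c^{⊗(k−n)}⟩ ∈ H^{⊗n} (contraction against the (k−n)-fold tensor power of c). Then for each fixed n the series Σ_{k=n}^{∞} binom(k,n)·T^{⊗n}(C_{k,n} f_k) converges in H^{⊗n}. -/

import Mathlib

open scoped RealInnerProductSpace

open Filter in
lemma aux_summable_u (n : ℕ) (c2 : ℝ) (hc2 : 0 ≤ c2) :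
    Summable (fun k : ℕ => (((n + k).choose n : ℝ)) ^ 2 * c2 ^ k / ((n + k).factorial : ℝ)) := by
  set u : ℕ → ℝ := fun k => (((n + k).choose n : ℝ)) ^ 2 * c2 ^ k / ((n + k).factorial : ℝ) with hu
  apply summable_of_ratio_norm_eventually_le (r := (1:ℝ)/2) (by norm_num)
  rw [Filter.eventually_atTop]
  refine ⟨⌈2 * ((n:ℝ) + 1) * c2⌉₊, fun k hk => ?_⟩
  have hknum : 2 * ((n:ℝ) + 1) * c2 ≤ (k:ℝ) + 1 := by
    calc 2 * ((n:ℝ) + 1) * c2 ≤ ⌈2 * ((n:ℝ) + 1) * c2⌉₊ := Nat.le_ceil _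
      _ ≤ (k:ℝ) := by exact_mod_cast hk
      _ ≤ (k:ℝ) + 1 := by linarith
  have hchoose : ((k:ℝ) + 1) * ((n + (k+1)).choose n : ℝ) = ((n:ℝ) + k + 1) * ((n + k).choose n : ℝ) := by
    have h := Nat.add_one_mul_choose_eq (n + k) k
    have hsymm : (n + k).choose k = (n + k).choose n := by
      rw [Nat.add_comm n k]; exact Nat.choose_symm_add
    have hsymm2 : (n + k + 1).choose (k + 1) = (n + (k + 1)).choose n := by
      have h1 : n + k + 1 = (k + 1) + n := by omega
      rw [h1, Nat.choose_symm_add]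
      congr 1
      omega
    rw [hsymm, hsymm2] at h
    have hnat : (k+1) * ((n+(k+1)).choose n) = (n+k+1) * ((n+k).choose n) := by
      rw [Nat.mul_comm]
      exact h.symm
    exact_mod_cast hnat
  have hNk : (0:ℝ) < ((n + k).factorial : ℝ) := by positivity
  have hNk1 : (0:ℝ) < ((n + (k+1)).factorial : ℝ) := by positivity
  have hfact : ((n + (k+1)).factorial : ℝ) = ((n:ℝ) + k + 1) * ((n + k).factorial : ℝ) := by
    have h1 : n + (k + 1) = (n + k) + 1 := by omega
    rw [h1, Nat.factorial_succ]
    push_cast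
    ring
  have hpos1 : (0:ℝ) < (n:ℝ) + k + 1 := by positivity
  have hkpos : (0:ℝ) < ((k:ℝ) + 1) ^ 2 := by positivity
  have hratio : u (k + 1) * (((k:ℝ) + 1) ^ 2 * ((n:ℝ) + k + 1)) = u k * (((n:ℝ) + k + 1) ^ 2 * c2) := by
    simp only [hu]
    rw [hfact]
    rw [div_mul_eq_mul_div, div_mul_eq_mul_div, div_eq_div_iff (by positivity) (by positivity)]
    linear_combination ((((k:ℝ)+1) * ((n+(k+1)).choose n : ℝ) + ((n:ℝ)+k+1) * ((n+k).choose n : ℝ)) *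
      (((n:ℝ)+k+1) * c2^k * c2 * ((n+k).factorial : ℝ))) * hchoose
  have hunn : 0 ≤ u k := by simp only [hu]; positivity
  have hunn1 : 0 ≤ u (k + 1) := by simp only [hu]; positivity
  rw [Real.norm_eq_abs, Real.norm_eq_abs, abs_of_nonneg hunn1, abs_of_nonneg hunn]
  have hineq : ((n:ℝ) + k + 1) ^ 2 * c2 ≤ (1/2) * (((k:ℝ) + 1) ^ 2 * ((n:ℝ) + k + 1)) := by
    have hn0 : (0:ℝ) ≤ (n:ℝ) := Nat.cast_nonneg n
    have hk0 : (0:ℝ) ≤ (k:ℝ) := Nat.cast_nonneg k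
    have h1 : ((n:ℝ) + k + 1) * c2 ≤ (1/2) * ((k:ℝ) + 1) ^ 2 := by
      have h2 : ((n:ℝ) + k + 1) * c2 ≤ ((n:ℝ) + 1) * ((k:ℝ) + 1) * c2 := by nlinarith [mul_nonneg (mul_nonneg hn0 hk0) hc2]
      have h3 : ((n:ℝ) + 1) * ((k:ℝ) + 1) * c2 ≤ (1/2) * ((k:ℝ) + 1) ^ 2 := by nlinarith
      linarith
    nlinarith
  have hpos2 : (0:ℝ) < ((k:ℝ) + 1) ^ 2 * ((n:ℝ) + k + 1) := by positivity
  rw [← mul_le_mul_iff_of_pos_right hpos2]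
  calc u (k+1) * (((k:ℝ) + 1) ^ 2 * ((n:ℝ) + k + 1)) = u k * (((n:ℝ) + k + 1) ^ 2 * c2) := hratio
    _ ≤ u k * ((1/2) * (((k:ℝ) + 1) ^ 2 * ((n:ℝ) + k + 1))) :=
        mul_le_mul_of_nonneg_left hineq hunn
    _ = 1 / 2 * u k * (((k:ℝ) + 1) ^ 2 * ((n:ℝ) + k + 1)) := by ring

/-- Convergence of the series `Σ_{k≥n} C(k,n) T^{⊗n}(⟨f_k, c^{⊗(k-n)}⟩)` in `H^{⊗n}`,
for a chaos-coefficient sequence with `Σ_k k!·‖f_k‖² < ∞`. The Hilbert tensor powers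
`H^{⊗k}` are axiomatized as Hilbert spaces `Hpow k` with elementary tensors `mk`,
`T^{⊗n}` acts slot-wise on elementary tensors, and the contraction `Con k n f = ⟨f, c^{⊗(k-n)}⟩`
is characterized by `⟪Con k n f, y₁ ⊗ ⋯ ⊗ yₙ⟫ = ⟪f, y₁ ⊗ ⋯ ⊗ yₙ ⊗ c ⊗ ⋯ ⊗ c⟫`. -/
theorem stmt4 {H : Type*} [NormedAddCommGroup H] [InnerProductSpace ℝ H] [CompleteSpace H]
    (Hpow : ℕ → Type*) [∀ k, NormedAddCommGroup (Hpow k)]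
    [∀ k, InnerProductSpace ℝ (Hpow k)] [∀ k, CompleteSpace (Hpow k)]
    (mk : ∀ k, (Fin k → H) → Hpow k)
    (hmk_inner : ∀ k (x y : Fin k → H), ⟪mk k x, mk k y⟫ = ∏ i, ⟪x i, y i⟫)
    (hmk_dense : ∀ k, Dense ((Submodule.span ℝ (Set.range (mk k)) : Submodule ℝ (Hpow k)) : Set (Hpow k)))
    (T : H →L[ℝ] H)
    (Tpow : ∀ n, Hpow n →L[ℝ] Hpow n)
    (hTpow : ∀ n (x : Fin n → H), Tpow n (mk n x) = mk n (fun i => T (x i)))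
    (c : H)
    (Con : ∀ k n, Hpow k →ₗ[ℝ] Hpow n)
    (hCon : ∀ k n, n ≤ k → ∀ (x : Hpow k) (y : Fin n → H),
      ⟪Con k n x, mk n y⟫ =
        ⟪x, mk k (fun i => if h : (i : ℕ) < n then y ⟨i, h⟩ else c)⟫)
    (f : ∀ k, Hpow k)
    (hf : Summable (fun k : ℕ => (k.factorial : ℝ) * ‖f k‖ ^ 2))
    (n : ℕ) :
    Summable (fun k : ℕ =>
      (((n + k).choose n : ℝ)) • Tpow n (Con (n + k) n (f (n + k)))) := by
  classical
  -- Step 1: the contraction norm bound ‖Con (n+m) n x‖ ≤ ‖c‖^m * ‖x‖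
  have key : ∀ (m : ℕ) (x : Hpow (n + m)), ‖Con (n + m) n x‖ ≤ ‖c‖ ^ m * ‖x‖ := by
    intro m x
    set ext : (Fin n → H) → (Fin (n + m) → H) :=
      fun y i => if h : (i : ℕ) < n then y ⟨i, h⟩ else c with hext
    have hinner : ∀ y y' : Fin n → H,
        ⟪mk (n + m) (ext y), mk (n + m) (ext y')⟫ = (‖c‖ ^ 2) ^ m * ⟪mk n y, mk n y'⟫ := by
      intro y y'
      rw [hmk_inner, hmk_inner]
      set G : ℕ → ℝ := fun j => if h : j < n then ⟪y ⟨j, h⟩, y' ⟨j, h⟩⟫ else ⟪c, c⟫ with hG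
      have h1 : ∏ i : Fin (n + m), ⟪ext y i, ext y' i⟫ = ∏ i : Fin (n + m), G (i : ℕ) := by
        apply Finset.prod_congr rfl
        intro i _
        by_cases h : (i : ℕ) < n <;> simp [hext, hG, h]
      rw [h1, Fin.prod_univ_eq_prod_range G (n + m), Finset.prod_range_add]
      have h2 : ∏ x ∈ Finset.range m, G (n + x) = (‖c‖ ^ 2) ^ m := by
        have he : ∀ x ∈ Finset.range m, G (n + x) = ‖c‖ ^ 2 := by
          intro x _
          simp only [hG]
          rw [dif_neg (by omega)]
          exact real_inner_self_eq_norm_sq c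
        rw [Finset.prod_congr rfl he, Finset.prod_const, Finset.card_range]
      have h3 : ∏ x ∈ Finset.range n, G x = ∏ j : Fin n, ⟪y j, y' j⟫ := by
        rw [← Fin.prod_univ_eq_prod_range G n]
        exact Finset.prod_congr rfl fun j _ => by simp [hG, j.isLt]
      rw [h2, h3, mul_comm]
    -- the graph submodule
    set M : Submodule ℝ (Hpow n × Hpow (n + m)) :=
      Submodule.span ℝ (Set.range (fun y : Fin n → H =>
        ((mk n y, mk (n + m) (ext y)) : Hpow n × Hpow (n + m)))) with hM
    have ha : ∀ p ∈ M, ⟪Con (n + m) n x, p.1⟫ = ⟪x, p.2⟫ := by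
      intro p hp
      induction hp using Submodule.span_induction with
      | mem p hp =>
        obtain ⟨y, rfl⟩ := hp
        exact hCon (n + m) n (Nat.le_add_right n m) x y
      | zero => simp
      | add p q hp hq ihp ihq =>
        simp only [Prod.fst_add, Prod.snd_add, inner_add_right, ihp, ihq]
      | smul a p hp ih =>
        simp only [Prod.smul_fst, Prod.smul_snd, real_inner_smul_right, ih]
    have hb : ∀ p ∈ M, ∀ q ∈ M, ⟪p.2, q.2⟫ = (‖c‖ ^ 2) ^ m * ⟪p.1, q.1⟫ := by
      intro p hp q hq
      induction hp, hq using Submodule.span_induction₂ with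
      | mem_mem p q hp hq =>
        obtain ⟨y, rfl⟩ := hp
        obtain ⟨y', rfl⟩ := hq
        exact hinner y y'
      | zero_left q hq => simp
      | zero_right p hp => simp
      | add_left p p' q hp hp' hq ih ih' =>
        simp only [Prod.fst_add, Prod.snd_add, inner_add_left, ih, ih']
        ring
      | add_right p q q' hp hq hq' ih ih' =>
        simp only [Prod.fst_add, Prod.snd_add, inner_add_right, ih, ih']
        ring
      | smul_left a p q hp hq ih =>
        simp only [Prod.smul_fst, Prod.smul_snd, real_inner_smul_left, ih]
        ring
      | smul_right a p q hp hq ih =>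
        simp only [Prod.smul_fst, Prod.smul_snd, real_inner_smul_right, ih]
        ring
    have hrep : ∀ z ∈ Submodule.span ℝ (Set.range (mk n)), ∃ w, ((z, w) : Hpow n × Hpow (n + m)) ∈ M := by
      intro z hz
      induction hz using Submodule.span_induction with
      | mem z hz =>
        obtain ⟨y, rfl⟩ := hz
        exact ⟨mk (n + m) (ext y), Submodule.subset_span ⟨y, rfl⟩⟩
      | zero => exact ⟨0, Submodule.zero_mem M⟩
      | add z z' hz hz' ih ih' =>
        obtain ⟨w, hw⟩ := ih
        obtain ⟨w', hw'⟩ := ih'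
        exact ⟨w + w', by simpa [Prod.mk_add_mk] using Submodule.add_mem M hw hw'⟩
      | smul a z hz ih =>
        obtain ⟨w, hw⟩ := ih
        exact ⟨a • w, by simpa [Prod.smul_mk] using Submodule.smul_mem M a hw⟩
    have hspan : ∀ z ∈ (Submodule.span ℝ (Set.range (mk n)) : Submodule ℝ (Hpow n)),
        |⟪Con (n + m) n x, z⟫| ≤ (‖x‖ * ‖c‖ ^ m) * ‖z‖ := by
      intro z hz
      obtain ⟨w, hw⟩ := hrep z hz
      have h1 : ⟪Con (n + m) n x, z⟫ = ⟪x, w⟫ := ha _ hw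
      have h2 : ⟪(((z, w) : Hpow n × Hpow (n + m))).2, (((z, w) : Hpow n × Hpow (n + m))).2⟫
          = (‖c‖ ^ 2) ^ m * ⟪(((z, w) : Hpow n × Hpow (n + m))).1, (((z, w) : Hpow n × Hpow (n + m))).1⟫ :=
        hb _ hw _ hw
      simp only at h2
      rw [real_inner_self_eq_norm_sq, real_inner_self_eq_norm_sq] at h2
      have hw2 : ‖w‖ ≤ ‖c‖ ^ m * ‖z‖ := by
        have h3 : ‖w‖ ^ 2 = (‖c‖ ^ m * ‖z‖) ^ 2 := by
          rw [h2]; ring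
        have h4 : (0:ℝ) ≤ ‖w‖ := norm_nonneg _
        have h5 : (0:ℝ) ≤ ‖c‖ ^ m * ‖z‖ := by positivity
        nlinarith [sq_nonneg (‖w‖ - ‖c‖ ^ m * ‖z‖), sq_nonneg (‖w‖ + ‖c‖ ^ m * ‖z‖)]
      calc |⟪Con (n + m) n x, z⟫| = |⟪x, w⟫| := by rw [h1]
        _ ≤ ‖x‖ * ‖w‖ := abs_real_inner_le_norm x w
        _ ≤ ‖x‖ * (‖c‖ ^ m * ‖z‖) := by
            exact mul_le_mul_of_nonneg_left hw2 (norm_nonneg x)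
        _ = (‖x‖ * ‖c‖ ^ m) * ‖z‖ := by ring
    have hall : ∀ z : Hpow n, |⟪Con (n + m) n x, z⟫| ≤ (‖x‖ * ‖c‖ ^ m) * ‖z‖ := by
      intro z
      have hz : z ∈ closure ((Submodule.span ℝ (Set.range (mk n)) : Submodule ℝ (Hpow n)) : Set (Hpow n)) :=
        (hmk_dense n) z
      refine le_on_closure hspan ?_ ?_ hz
      · exact ((continuous_const.inner continuous_id).abs).continuousOn
      · exact (continuous_const.mul continuous_norm).continuousOn
    have hu := hall (Con (n + m) n x)
    rw [real_inner_self_eq_norm_sq, abs_of_nonneg (by positivity)] at hu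
    by_cases h0 : ‖Con (n + m) n x‖ = 0
    · rw [h0]; positivity
    · have hpos : 0 < ‖Con (n + m) n x‖ := lt_of_le_of_ne (norm_nonneg _) (Ne.symm h0)
      nlinarith [hu]
  -- Step 2: the summability
  set N : ℕ → ℝ := fun k => ((n + k).factorial : ℝ) with hN
  have hNpos : ∀ k, 0 < N k := fun k => by positivity
  set u : ℕ → ℝ := fun k => (((n + k).choose n : ℝ)) ^ 2 * (‖c‖ ^ 2) ^ k / N k with hu
  set v : ℕ → ℝ := fun k => N k * ‖f (n + k)‖ ^ 2 with hv
  have hsumv : Summable v := hf.comp_injective (add_right_injective n)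
  have hsumu : Summable u := aux_summable_u n (‖c‖ ^ 2) (by positivity)
  -- comparison
  apply Summable.of_norm_bounded (g := fun k => ‖Tpow n‖ * ((1/2) * (u k + v k)))
  · exact ((hsumu.add hsumv).mul_left (1/2)).mul_left ‖Tpow n‖
  · intro k
    have hb1 : ‖(((n + k).choose n : ℝ)) • Tpow n (Con (n + k) n (f (n + k)))‖
        ≤ ((n + k).choose n : ℝ) * (‖Tpow n‖ * (‖c‖ ^ k * ‖f (n + k)‖)) := by
      rw [norm_smul, Real.norm_eq_abs, abs_of_nonneg (by positivity)]
      refine mul_le_mul_of_nonneg_left ?_ (by positivity)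
      calc ‖Tpow n (Con (n + k) n (f (n + k)))‖ ≤ ‖Tpow n‖ * ‖Con (n + k) n (f (n + k))‖ :=
            (Tpow n).le_opNorm _
        _ ≤ ‖Tpow n‖ * (‖c‖ ^ k * ‖f (n + k)‖) :=
            mul_le_mul_of_nonneg_left (key k (f (n + k))) (norm_nonneg _)
    refine hb1.trans ?_
    have hamgm : ((n + k).choose n : ℝ) * (‖c‖ ^ k * ‖f (n + k)‖) ≤ (1/2) * (u k + v k) := by
      set a : ℝ := ((n + k).choose n : ℝ) * ‖c‖ ^ k with ha
      set b : ℝ := ‖f (n + k)‖ with hbdef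
      have hNk := hNpos k
      have hNi : N k * (N k)⁻¹ = 1 := mul_inv_cancel₀ (ne_of_gt hNk)
      have hui : u k = a ^ 2 * (N k)⁻¹ := by
        simp only [hu, ha, div_eq_mul_inv, mul_pow, ← pow_mul]
        ring_nf
      have hvi : v k = N k * b ^ 2 := rfl
      rw [hui, hvi]
      have hinv : (0:ℝ) < (N k)⁻¹ := by positivity
      have hsq : (0:ℝ) ≤ (a - N k * b) ^ 2 * (N k)⁻¹ :=
        mul_nonneg (sq_nonneg _) (le_of_lt hinv)
      have hab : a * b = ((n + k).choose n : ℝ) * (‖c‖ ^ k * ‖f (n + k)‖) := by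
        rw [ha, hbdef]; ring
      rw [← hab]
      nlinarith [hsq, hNi, hNk]
    calc ((n + k).choose n : ℝ) * (‖Tpow n‖ * (‖c‖ ^ k * ‖f (n + k)‖))
        = ‖Tpow n‖ * (((n + k).choose n : ℝ) * (‖c‖ ^ k * ‖f (n + k)‖)) := by ring
      _ ≤ ‖Tpow n‖ * ((1/2) * (u k + v k)) :=
          mul_le_mul_of_nonneg_left hamgm (norm_nonneg _)
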